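/- arXiv:1905.11547 — 6 statements merged into one kernel-verified Lean document; each statement's English description precedes it below -/
import Mathlib

section
/- If ρ is an automorphism of exact order 4 of a free Z-module of rank 2, then ρ² = -id. -/
lemma ch_fin_two (A : Matrix (Fin 2) (Fin 2) ℤ) :
    A ^ 2 = A.trace • A - A.det • (1 : Matrix (Fin 2) (Fin 2) ℤ) := by
  ext i j
  simp only [pow_two, Matrix.mul_apply, Fin.sum_univ_two, Matrix.trace_fin_two,
    Matrix.det_fin_two, Matrix.sub_apply, Matrix.smul_apply, smul_eq_mul]
  fin_cases i <;> fin_cases j <;> simp [Matrix.one_apply] <;> ring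

lemma mat_lemma (A : Matrix (Fin 2) (Fin 2) ℤ) (h4 : A ^ 4 = 1) (h2 : A ^ 2 ≠ 1) :
    A ^ 2 = -1 := by
  obtain ⟨t, ht⟩ : ∃ t, A.trace = t := ⟨_, rfl⟩
  obtain ⟨d, hd⟩ : ∃ d, A.det = d := ⟨_, rfl⟩
  have hCH : A ^ 2 = t • A - d • (1 : Matrix (Fin 2) (Fin 2) ℤ) := by
    rw [← ht, ← hd]; exact ch_fin_two A
  have hdet : d = 1 ∨ d = -1 := by
    have h1 : d ^ 4 = 1 := by
      rw [← hd, ← Matrix.det_pow, h4, Matrix.det_one]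
    exact Int.isUnit_iff.mp (IsUnit.of_mul_eq_one (a := d) (d ^ 3) (by linear_combination h1))
  have key : A ^ 4 = (t ^ 3 - 2 * t * d) • A + (d ^ 2 - t ^ 2 * d) • (1 : Matrix (Fin 2) (Fin 2) ℤ) := by
    have e2 : A ^ 4 = A ^ 2 * A ^ 2 := by rw [← pow_add]
    have hAA : A * A = t • A - d • (1 : Matrix (Fin 2) (Fin 2) ℤ) := by
      rw [← pow_two]; exact hCH
    rw [e2, hCH]
    simp only [sub_mul, mul_sub, smul_mul_assoc, mul_smul_comm, mul_one, one_mul, smul_smul, hAA]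
    module
  have h4' : (t ^ 3 - 2 * t * d) • A + (d ^ 2 - t ^ 2 * d) • (1 : Matrix (Fin 2) (Fin 2) ℤ) = 1 := by
    rw [← key, h4]
  have htr : (t ^ 3 - 2 * t * d) * t + (d ^ 2 - t ^ 2 * d) * 2 = 2 := by
    have h5 := congrArg Matrix.trace h4'
    simp only [Matrix.trace_add, Matrix.trace_smul, Matrix.trace_one, smul_eq_mul, ht, Fintype.card_fin] at h5
    push_cast at h5
    linarith
  rcases hdet with hd1 | hd1
  · subst hd1
    have ht2 : t = 0 ∨ t = 2 ∨ t = -2 := by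
      have h0 : t ^ 2 * (t ^ 2 - 4) = 0 := by linarith
      rcases mul_eq_zero.mp h0 with h | h
      · exact Or.inl (pow_eq_zero_iff (n := 2) (by norm_num) |>.mp h)
      · have h9 : (t - 2) * (t + 2) = 0 := by linarith
        rcases mul_eq_zero.mp h9 with h | h
        · exact Or.inr (Or.inl (by linarith))
        · exact Or.inr (Or.inr (by linarith))
    rcases ht2 with h | h | h
    · subst h; rw [hCH]; module
    · exfalso
      subst h
      have h44 : (4 : ℤ) • A = (4 : ℤ) • (1 : Matrix (Fin 2) (Fin 2) ℤ) := by
        linear_combination (norm := module) h4'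
      have hA : A = 1 := smul_right_injective _ (by norm_num : (4:ℤ) ≠ 0) h44
      exact h2 (by rw [hA, one_pow])
    · exfalso
      subst h
      have h44 : (4 : ℤ) • A = (4 : ℤ) • (-1 : Matrix (Fin 2) (Fin 2) ℤ) := by
        linear_combination (norm := module) -h4'
      have hA : A = -1 := smul_right_injective _ (by norm_num : (4:ℤ) ≠ 0) h44
      exact h2 (by rw [hA, neg_one_sq])
  · exfalso
    subst hd1
    have ht0 : t = 0 := by nlinarith [sq_nonneg t, sq_nonneg (t ^ 2)]
    subst ht0
    exact h2 (by rw [hCH]; module)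


/-- If `ρ` is an automorphism of exact order 4 of a free `ℤ`-module of rank 2, then
`ρ² = -id`. -/
theorem stmt_2 (M : Type*) [AddCommGroup M] [Module ℤ M]
    (b0 : Module.Basis (Fin 2) ℤ M)
    (ρ : M ≃ₗ[ℤ] M) (h4 : ρ ^ 4 = 1) (h2 : ρ ^ 2 ≠ 1) :
    (ρ.toLinearMap * ρ.toLinearMap : Module.End ℤ M) = -1 := by
  set f : Module.End ℤ M := ρ.toLinearMap with hf
  have hf4 : f ^ 4 = 1 := by
    ext x
    have h := congrArg (fun e => e x) h4
    simpa [pow_succ, Module.End.mul_apply, hf] using h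
  have hf2 : f ^ 2 ≠ 1 := by
    intro h
    apply h2
    ext x
    have h' := congrArg (fun e => e x) h
    simpa [pow_succ, Module.End.mul_apply, hf] using h'
  let e := LinearMap.toMatrixAlgEquiv b0
  have hA4 : (e f) ^ 4 = 1 := by rw [← map_pow, hf4, map_one]
  have hA2 : (e f) ^ 2 ≠ 1 := by
    intro h
    exact hf2 (EquivLike.injective e (by rw [map_pow, h, map_one]))
  have hm := mat_lemma (e f) hA4 hA2
  have h' : e (f * f) = e (-1) := by
    rw [map_mul, map_neg, map_one, ← pow_two, hm]
  exact EquivLike.injective e h'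
end

section
/- A positive definite even lattice T of rank 2 admits an isometry of order 3 if and only if there exists a positive integer a such that T is isometric to A2(a), i.e., T has a basis with Gram matrix [[2a, a],[a, 2a]]. -/
lemma int_round (m c : ℤ) (hm : 0 < m) : ∃ k c', c = m * k + c' ∧ 2 * |c'| ≤ m := by
  have h0 : 0 ≤ c % m := Int.emod_nonneg c hm.ne'
  have h1 : c % m < m := Int.emod_lt_of_pos c hm
  have hd : m * (c / m) + c % m = c := Int.mul_ediv_add_emod c m
  by_cases h : 2 * (c % m) ≤ m
  · exact ⟨c / m, c % m, by linarith, by rwa [abs_of_nonneg h0]⟩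
  · refine ⟨c / m + 1, c % m - m, by ring_nf; linarith, ?_⟩
    rw [abs_of_nonpos (by linarith)]
    linarith

lemma quad_zero (x y : ℤ) (h : x^2 + x*y + y^2 = 0) : x = 0 ∧ y = 0 := by
  constructor <;> nlinarith [sq_nonneg (2*x+y), sq_nonneg (2*y+x), sq_nonneg x, sq_nonneg y]

lemma cube_mat (A : Matrix (Fin 2) (Fin 2) ℤ) (h3 : A * A * A = 1) (h1 : A ≠ 1) :
    A * A + A + 1 = 0 := by
  set p := A 0 0 with hp
  set q := A 0 1 with hq
  set r := A 1 0 with hr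
  set s := A 1 1 with hs
  have e00 : (A * A * A) 0 0 = 1 := by rw [h3]; simp
  have e01 : (A * A * A) 0 1 = 0 := by rw [h3]; simp [Matrix.one_apply]
  have e10 : (A * A * A) 1 0 = 0 := by rw [h3]; simp [Matrix.one_apply]
  have e11 : (A * A * A) 1 1 = 1 := by rw [h3]; simp
  simp only [Matrix.mul_apply, Fin.sum_univ_two, ← hp, ← hq, ← hr, ← hs] at e00 e01 e10 e11
  set t := p + s with ht
  set d := p * s - q * r with hd
  have hq' : q * (t * t - d) = 0 := by linear_combination e01
  have hr' : r * (t * t - d) = 0 := by linear_combination e10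
  have hpe : (t * t - d) * p - t * d = 1 := by linear_combination e00
  have hse : (t * t - d) * s - t * d = 1 := by linear_combination e11
  by_cases hc : t * t - d = 0
  · have htd : t * d = -1 := by linear_combination -hpe + p * hc
    have hu : IsUnit t := IsUnit.of_mul_eq_one (a := t) (-d) (by linear_combination -htd)
    have ht1 : t = 1 ∨ t = -1 := Int.isUnit_iff.mp hu
    have htm : t = -1 := by
      rcases ht1 with h | h
      · exfalso; rw [h] at htd hc; omega
      · exact h
    have hd1 : d = 1 := by rw [htm] at htd; linarith
    have h1' : p + s = -1 := by rw [← ht, htm]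
    have h2' : p * s - q * r = 1 := by rw [← hd, hd1]
    ext i j
    fin_cases i <;> fin_cases j <;>
      simp only [Matrix.add_apply, Matrix.mul_apply, Fin.sum_univ_two, Matrix.one_apply,
        Matrix.zero_apply, ← hp, ← hq, ← hr, ← hs] <;> simp <;>
      [linear_combination p * h1' - h2'; linear_combination q * h1'; linear_combination r * h1';
       linear_combination s * h1' - h2']
  · have hq0 : q = 0 := by rcases mul_eq_zero.mp hq' with h | h; exact h; exact absurd h hc
    have hr0 : r = 0 := by rcases mul_eq_zero.mp hr' with h | h; exact h; exact absurd h hc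
    have hp3 : p * p * p = 1 := by rw [hq0, hr0] at e00; linear_combination e00
    have hs3 : s * s * s = 1 := by rw [hq0, hr0] at e11; linear_combination e11
    have hp1 : p = 1 := by
      rcases Int.isUnit_iff.mp (IsUnit.of_mul_eq_one (a := p) (p*p) (by linear_combination hp3)) with h | h
      · exact h
      · rw [h] at hp3; omega
    have hs1 : s = 1 := by
      rcases Int.isUnit_iff.mp (IsUnit.of_mul_eq_one (a := s) (s*s) (by linear_combination hs3)) with h | h
      · exact h
      · rw [h] at hs3; omega
    exfalso; apply h1
    ext i j
    fin_cases i <;> fin_cases j <;> simp [Matrix.one_apply]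
    · exact hp1
    · exact hq0
    · exact hr0
    · exact hs1

set_option maxHeartbeats 1000000 in
/-- A positive definite even lattice of rank 2 admits an isometry of order 3 iff it is
isometric to `A₂(a)` for some positive integer `a`, i.e. it has a basis with Gram matrix
`[[2a, a],[a, 2a]]`. -/
theorem stmt_3 (M : Type*) [AddCommGroup M] [Module ℤ M]
    (b0 : Module.Basis (Fin 2) ℤ M)
    (B : M →ₗ[ℤ] M →ₗ[ℤ] ℤ)
    (hsymm : ∀ v w : M, B v w = B w v)
    (hpos : ∀ v : M, v ≠ 0 → 0 < B v v)
    (heven : ∀ v : M, Even (B v v)) :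
    (∃ ρ : M ≃ₗ[ℤ] M, (∀ v w : M, B (ρ v) (ρ w) = B v w) ∧ orderOf ρ = 3) ↔
    (∃ a : ℤ, 0 < a ∧ ∃ e : Module.Basis (Fin 2) ℤ M,
      B (e 0) (e 0) = 2 * a ∧ B (e 0) (e 1) = a ∧ B (e 1) (e 1) = 2 * a) := by
  constructor
  · rintro ⟨ρ, hiso, hord⟩
    -- step 1: ρ² + ρ + 1 = 0
    have hρ2 : ∀ v : M, ρ (ρ v) + ρ v + v = 0 := by
      have h3 : ρ ^ 3 = 1 := by rw [← hord]; exact pow_orderOf_eq_one ρ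
      have hne : ρ ≠ 1 := by
        intro h
        rw [h, orderOf_one] at hord
        omega
      have h3' : ∀ v : M, ρ (ρ (ρ v)) = v := by
        intro v
        have : (ρ ^ 3) v = v := by rw [h3]; rfl
        rw [pow_succ, pow_succ, pow_one] at this
        exact this
      set A := LinearMap.toMatrix b0 b0 ρ.toLinearMap with hA
      have hcomp : (ρ.toLinearMap ∘ₗ ρ.toLinearMap) ∘ₗ ρ.toLinearMap = LinearMap.id := by
        ext v
        simpa using h3' v
      have hA3 : A * A * A = 1 := by
        rw [hA, ← LinearMap.toMatrix_comp b0 b0 b0, ← LinearMap.toMatrix_comp b0 b0 b0, hcomp,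
          LinearMap.toMatrix_id]
      have hAne : A ≠ 1 := by
        intro h
        apply hne
        have : ρ.toLinearMap = LinearMap.id := by
          apply (LinearMap.toMatrix b0 b0).injective
          rw [← hA, h, LinearMap.toMatrix_id]
        ext v
        exact LinearMap.congr_fun this v
      have hrel := cube_mat A hA3 hAne
      have hlin : ρ.toLinearMap ∘ₗ ρ.toLinearMap + ρ.toLinearMap + LinearMap.id = 0 := by
        apply (LinearMap.toMatrix b0 b0).injective
        rw [map_add, map_add, LinearMap.toMatrix_comp b0 b0 b0, LinearMap.toMatrix_id, ← hA,
          hrel, map_zero]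
      intro v
      simpa using LinearMap.congr_fun hlin v
    -- step 2: minimal vector
    set S : Set ℕ := {n | ∃ u : M, u ≠ 0 ∧ B u u = (n : ℤ)} with hS
    have hSne : S.Nonempty :=
      ⟨(B (b0 0) (b0 0)).toNat, b0 0, b0.ne_zero 0,
        (Int.toNat_of_nonneg (hpos _ (b0.ne_zero 0)).le).symm⟩
    obtain ⟨n, ⟨v, hv0, hvB⟩, hmin⟩ := Nat.lt_wfRel.wf.has_min S hSne
    have hminI : ∀ u : M, u ≠ 0 → (n : ℤ) ≤ B u u := by
      intro u hu
      have hmem : (B u u).toNat ∈ S := ⟨u, hu, (Int.toNat_of_nonneg (hpos u hu).le).symm⟩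
      have h := hmin _ hmem
      have h2 := Int.toNat_of_nonneg (hpos u hu).le
      change ¬ (B u u).toNat < n at h
      omega
    obtain ⟨r, hr⟩ := heven v
    have hBvv : B v v = 2 * r := by linarith
    have hr0 : 0 < r := by have := hpos v hv0; linarith
    have hn2r : (n : ℤ) = 2 * r := by rw [← hvB, hBvv]
    set w := ρ v with hw
    have h2 : ρ w = -w - v := by
      rw [hw]
      have h := hρ2 v
      rw [add_assoc, add_eq_zero_iff_eq_neg] at h
      rw [h]; abel
    have hWW : B w w = 2 * r := by rw [hw, hiso]; exact hBvv
    have hVW : B v w = -r := by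
      have h1 := hiso v w
      rw [← hw, h2] at h1
      simp only [map_sub, map_neg, LinearMap.sub_apply, LinearMap.neg_apply] at h1
      have hs := hsymm w v
      linarith [h1, hWW]
    have hWV : B w v = -r := by rw [hsymm]; exact hVW
    -- quadratic form on the candidate basis
    have hquad : ∀ c d : ℤ, B (c • v + d • (-w)) (c • v + d • (-w)) =
        2 * r * (c ^ 2 + c * d + d ^ 2) := by
      intro c d
      simp only [← Int.cast_smul_eq_zsmul ℤ, Int.cast_id]
      simp only [map_add, map_smul, map_neg, LinearMap.add_apply, LinearMap.smul_apply,
        LinearMap.neg_apply, smul_eq_mul]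
      linear_combination (c ^ 2) * hBvv + (d ^ 2) * hWW - (c * d) * hVW - (c * d) * hWV
    have hind : ∀ c d : ℤ, c • v + d • (-w) = 0 → c = 0 ∧ d = 0 := by
      intro c d hcd
      have hq := hquad c d
      rw [hcd] at hq
      simp only [map_zero, LinearMap.zero_apply] at hq
      have hq2 : c ^ 2 + c * d + d ^ 2 = 0 := by
        rcases mul_eq_zero.mp hq.symm with h | h
        · omega
        · exact h
      exact quad_zero c d hq2
    -- span
    haveI := Module.Finite.of_basis b0
    have hfr : Module.finrank ℤ M = 2 := by rw [Module.finrank_eq_card_basis b0]; simp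
    have hspan : ∀ u : M, ∃ k l : ℤ, u = k • v + l • (-w) := by
      intro u
      have hnli : ¬ LinearIndependent ℤ ![u, v, -w] := by
        intro hli'
        have := hli'.fintype_card_le_finrank
        rw [hfr] at this
        simp at this
      obtain ⟨g, hg, i, hgi⟩ := Fintype.not_linearIndependent_iff.mp hnli
      have hsum : g 0 • u + g 1 • v + g 2 • (-w) = 0 := by
        simp only [← Int.cast_smul_eq_zsmul ℤ, Int.cast_id]
        simpa [Fin.sum_univ_three] using hg
      have hg0 : g 0 ≠ 0 := by
        intro h0
        have hz : g 1 • v + g 2 • (-w) = 0 := by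
          rw [h0] at hsum; simpa using hsum
        obtain ⟨h1', h2'⟩ := hind _ _ hz
        fin_cases i
        · exact hgi h0
        · exact hgi h1'
        · exact hgi h2'
      have key : ∀ m c d : ℤ, 0 < m → m • u = c • v + d • (-w) →
          ∃ k l : ℤ, u = k • v + l • (-w) := by
        intro m c d hm heq
        obtain ⟨k, c', hc, hck⟩ := int_round m c hm
        obtain ⟨l, d', hdd, hdl⟩ := int_round m d hm
        set u' : M := u - (k • v + l • (-w)) with hu'def
        have hmu' : m • u' = c' • v + d' • (-w) := by
          rw [hu'def]
          simp only [← Int.cast_smul_eq_zsmul ℤ, Int.cast_id] at heq ⊢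
          rw [smul_sub, heq, hc, hdd]
          module
        have hq := hquad c' d'
        rw [← hmu'] at hq
        simp only [← Int.cast_smul_eq_zsmul ℤ, Int.cast_id] at hq
        simp only [map_smul, LinearMap.smul_apply, smul_eq_mul] at hq
        by_cases h0 : u' = 0
        · refine ⟨k, l, ?_⟩
          rw [hu'def, sub_eq_zero] at h0
          exact h0
        · exfalso
          have hge := hminI _ h0
          rw [hn2r] at hge
          have hb1 : (2 * |c'|) * (2 * |c'|) ≤ m * m :=
            mul_self_le_mul_self (by positivity) hck
          have hb2 : (2 * |d'|) * (2 * |d'|) ≤ m * m :=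
            mul_self_le_mul_self (by positivity) hdl
          have hc2 : 4 * c' ^ 2 ≤ m ^ 2 := by
            nlinarith [sq_abs c']
          have hd2 : 4 * d' ^ 2 ≤ m ^ 2 := by
            nlinarith [sq_abs d']
          have hQ : 4 * (c' ^ 2 + c' * d' + d' ^ 2) ≤ 3 * m ^ 2 := by
            nlinarith [sq_nonneg (c' - d')]
          have hrQ := mul_le_mul_of_nonneg_left hQ hr0.le
          have hmX := mul_le_mul_of_nonneg_left hge (by positivity : (0:ℤ) ≤ m ^ 2)
          nlinarith [hq, hrQ, hmX, mul_pos hr0 (mul_pos hm hm)]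
      rcases lt_or_gt_of_ne hg0 with hneg | hposg
      · apply key (-(g 0)) (g 1) (g 2) (by omega)
        simp only [← Int.cast_smul_eq_zsmul ℤ, Int.cast_id] at hsum ⊢
        apply eq_of_sub_eq_zero
        rw [← neg_eq_zero, ← hsum]
        module
      · apply key (g 0) (-(g 1)) (-(g 2)) hposg
        simp only [← Int.cast_smul_eq_zsmul ℤ, Int.cast_id] at hsum ⊢
        apply eq_of_sub_eq_zero
        rw [← hsum]
        module
    -- build the basis
    have hli : LinearIndependent ℤ ![v, -w] := by
      rw [LinearIndependent.pair_iff]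
      intro s t hst
      apply hind
      simpa only [← Int.cast_smul_eq_zsmul ℤ, Int.cast_id] using hst
    have hsp : ⊤ ≤ Submodule.span ℤ (Set.range ![v, -w]) := by
      intro u _
      obtain ⟨k, l, hu⟩ := hspan u
      have hv' : v ∈ Set.range ![v, -w] := ⟨0, rfl⟩
      have hw' : -w ∈ Set.range ![v, -w] := ⟨1, rfl⟩
      rw [hu]
      simp only [← Int.cast_smul_eq_zsmul ℤ, Int.cast_id]
      exact Submodule.add_mem _
        (Submodule.smul_mem _ _ (Submodule.subset_span hv'))
        (Submodule.smul_mem _ _ (Submodule.subset_span hw'))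
    refine ⟨r, hr0, Module.Basis.mk hli hsp, ?_, ?_, ?_⟩
    · rw [Module.Basis.mk_apply]
      simpa using hBvv
    · rw [Module.Basis.mk_apply, Module.Basis.mk_apply]
      show B (![v, -w] 0) (![v, -w] 1) = r
      simp only [Matrix.cons_val_zero, Matrix.cons_val_one, Matrix.head_cons, map_neg]
      rw [hVW]; ring
    · rw [Module.Basis.mk_apply]
      show B (![v, -w] 1) (![v, -w] 1) = 2 * r
      simp only [Matrix.cons_val_one, Matrix.head_cons, map_neg, LinearMap.neg_apply,
        neg_neg, Matrix.cons_val_zero]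
      exact hWW
  · rintro ⟨a, ha, e, h00, h01, h11⟩
    have h10 : B (e 1) (e 0) = a := by rw [hsymm]; exact h01
    haveI : @SMulCommClass ℤ ℤ M ‹Module ℤ M›.toSMul ‹Module ℤ M›.toSMul :=
      @SMulCommClass.mk ℤ ℤ M ‹Module ℤ M›.toSMul ‹Module ℤ M›.toSMul (fun a b x =>
        (@mul_smul ℤ M _ ‹Module ℤ M›.toMulAction.toSemigroupAction a b x).symm.trans
          ((congrArg (fun c => @HSMul.hSMul ℤ M M (@instHSMul ℤ M ‹Module ℤ M›.toSMul) c x)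
            (mul_comm a b)).trans
            (@mul_smul ℤ M _ ‹Module ℤ M›.toMulAction.toSemigroupAction b a x)))
    set f : M →ₗ[ℤ] M := e.constr ℤ ![-(e 1), e 0 - e 1] with hf
    have hf0 : f (e 0) = -(e 1) := by
      rw [hf, Module.Basis.constr_basis]; rfl
    have hf1 : f (e 1) = e 0 - e 1 := by
      rw [hf, Module.Basis.constr_basis]; rfl
    have hfff : ∀ g : M →ₗ[ℤ] M, (∀ i, g (e i) = f (e i)) → g ∘ₗ (f ∘ₗ f) = LinearMap.id := by
      intro g hg
      apply e.ext
      intro i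
      fin_cases i <;>
        simp [LinearMap.comp_apply, hf0, hf1, map_sub, map_neg, hg 0, hg 1] <;> abel
    have h1 : f ∘ₗ (f ∘ₗ f) = LinearMap.id := hfff f (fun _ => rfl)
    have h2 : (f ∘ₗ f) ∘ₗ f = LinearMap.id := by
      rw [LinearMap.comp_assoc]; exact h1
    set ρ : M ≃ₗ[ℤ] M := LinearEquiv.ofLinear f (f ∘ₗ f) h1 h2 with hρ
    have hρap : ∀ v, ρ v = f v := fun v => rfl
    refine ⟨ρ, ?_, ?_⟩
    · intro v w
      have hkey : ∀ i j : Fin 2, B (f (e i)) (f (e j)) = B (e i) (e j) := by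
        intro i j
        fin_cases i <;> fin_cases j <;>
          simp [hf0, hf1, map_sub, map_neg, LinearMap.sub_apply, LinearMap.neg_apply,
            h00, h01, h10, h11] <;> ring
      have hBeq : B.compl₁₂ f f = B := by
        refine e.ext fun i => e.ext fun j => ?_
        simpa [LinearMap.compl₁₂_apply] using hkey i j
      have := LinearMap.congr_fun (LinearMap.congr_fun hBeq v) w
      simpa [LinearMap.compl₁₂_apply, hρap] using this
    · have hne : ρ ≠ 1 := by
        intro h
        have : f (e 0) = e 0 := by rw [← hρap, h]; rfl
        rw [hf0] at this
        have h0 : B (e 0) (e 0) = B (-(e 1)) (e 0) := by rw [this]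
        simp [h00, h10] at h0
        omega
      haveI : Fact (Nat.Prime 3) := ⟨by norm_num⟩
      refine orderOf_eq_prime ?_ hne
      ext v
      have : (ρ ^ 3) v = f (f (f v)) := by
        rw [pow_succ, pow_succ, pow_one]
        rfl
      rw [this]
      have := LinearMap.congr_fun h1 v
      simpa using this
end

section
/- A positive definite even lattice T of rank 2 admits an isometry of order 4 if and only if there exists a positive integer a such that T has a basis with Gram matrix [[2a, 0],[0, 2a]] (i.e., T ≅ A1²(2a)). -/
lemma sq_eq_neg_one_aux {M : Type*} [AddCommGroup M] [Module ℤ M]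
    (b0 : Module.Basis (Fin 2) ℤ M) (L : M →ₗ[ℤ] M) (h4 : L ^ 4 = 1) (h2 : L ^ 2 ≠ 1) :
    L ^ 2 = -1 := by
  set φ := LinearMap.toMatrixAlgEquiv b0 with hφ
  set A := φ L with hA
  have hA4 : A ^ 4 = 1 := by rw [hA, ← map_pow, h4, map_one]
  set S := A ^ 2 with hS
  have hSS : S * S = 1 := by rw [hS, ← pow_add]; exact hA4
  have hS1 : S ≠ 1 := by
    intro h
    apply h2
    have : φ (L ^ 2) = φ 1 := by rw [map_pow, map_one]; exact h
    exact EquivLike.injective φ this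
  have hdetA : A.det * A.det = 1 := by
    have h1 : (A.det) ^ 4 = 1 := by
      rw [← Matrix.det_pow, hA4, Matrix.det_one]
    have h2 : (A.det ^ 2) ^ 2 = 1 := by rw [← pow_mul]; exact h1
    have h3 : (0:ℤ) ≤ A.det ^ 2 := sq_nonneg _
    have h4' : A.det ^ 2 * (A.det ^ 2) = 1 := by rw [← pow_two]; exact h2
    rcases Int.eq_one_or_neg_one_of_mul_eq_one' h4' with ⟨h, _⟩ | ⟨h, _⟩
    · rw [pow_two] at h; exact h
    · rw [h] at h3; norm_num at h3
  have hdetS : S.det = 1 := by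
    rw [hS, Matrix.det_pow]
    rw [pow_two]; exact hdetA
  set p := S 0 0 with hp
  set q := S 0 1 with hq
  set r := S 1 0 with hr
  set s := S 1 1 with hs
  have hmul : ∀ i j, S i 0 * S 0 j + S i 1 * S 1 j = (1 : Matrix (Fin 2) (Fin 2) ℤ) i j := by
    intro i j
    have := congrFun (congrFun hSS i) j
    rwa [Matrix.mul_apply, Fin.sum_univ_two] at this
  have e1 : p * p + q * r = 1 := by have := hmul 0 0; simpa [Matrix.one_apply] using this
  have e2 : p * q + q * s = 0 := by have := hmul 0 1; simpa [Matrix.one_apply] using this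
  have e3 : r * p + s * r = 0 := by have := hmul 1 0; simpa [Matrix.one_apply] using this
  have edet : p * s - q * r = 1 := by
    have := hdetS; rwa [Matrix.det_fin_two] at this
  have key : p * (p + s) = 2 := by linear_combination e1 + edet
  have hps : p + s ≠ 0 := by intro h; rw [h, mul_zero] at key; norm_num at key
  have hq0 : q = 0 := by
    have : q * (p + s) = 0 := by linear_combination e2
    rcases mul_eq_zero.mp this with h | h
    · exact h
    · exact absurd h hps
  have hr0 : r = 0 := by
    have : r * (p + s) = 0 := by linear_combination e3
    rcases mul_eq_zero.mp this with h | h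
    · exact h
    · exact absurd h hps
  have hpp : p * p = 1 := by rw [hq0] at e1; linarith [e1]
  have hpsone : p * s = 1 := by rw [hq0] at edet; linarith [edet]
  have hp1 : p = 1 ∨ p = -1 := Int.eq_one_or_neg_one_of_mul_eq_one' hpp |>.imp And.left And.left
  rcases hp1 with h | h
  · exfalso
    apply hS1
    have hs1 : s = 1 := by rw [h] at hpsone; linarith
    ext i j
    fin_cases i <;> fin_cases j <;>
      simp [Matrix.one_apply, ← hp, ← hq, ← hr, ← hs, h, hq0, hr0, hs1]
  · have hs1 : s = -1 := by rw [h] at hpsone; linarith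
    have hSneg : S = -1 := by
      ext i j
      fin_cases i <;> fin_cases j <;>
        simp [Matrix.one_apply, ← hp, ← hq, ← hr, ← hs, h, hq0, hr0, hs1]
    have : φ (L ^ 2) = φ (-1) := by
      rw [map_pow, map_neg, map_one]
      exact hSneg
    exact EquivLike.injective φ this


lemma round_div_aux (m : ℤ) (hm : 0 < m) (α : ℤ) :
    ∃ q r : ℤ, α = q * m + r ∧ 2 * |r| ≤ m := by
  have h1 : m * (α / m) + α % m = α := Int.mul_ediv_add_emod α m
  have h2 : 0 ≤ α % m := Int.emod_nonneg α (by omega)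
  have h3 : α % m < m := Int.emod_lt_of_pos α hm
  by_cases h : 2 * (α % m) ≤ m
  · exact ⟨α / m, α % m, by linear_combination -h1, by rw [abs_of_nonneg h2]; omega⟩
  · refine ⟨α / m + 1, α % m - m, by linear_combination -h1, ?_⟩
    rw [abs_of_nonpos (by omega)]; omega


/-- A positive definite even lattice of rank 2 admits an isometry of order 4 iff it has a
basis with Gram matrix `[[2a, 0],[0, 2a]]` for some positive integer `a`. -/
theorem stmt_4 (M : Type*) [AddCommGroup M] [Module ℤ M]
    (b0 : Module.Basis (Fin 2) ℤ M)
    (B : M →ₗ[ℤ] M →ₗ[ℤ] ℤ)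
    (hsymm : ∀ v w : M, B v w = B w v)
    (hpos : ∀ v : M, v ≠ 0 → 0 < B v v)
    (heven : ∀ v : M, Even (B v v)) :
    (∃ ρ : M ≃ₗ[ℤ] M, (∀ v w : M, B (ρ v) (ρ w) = B v w) ∧ orderOf ρ = 4) ↔
    (∃ a : ℤ, 0 < a ∧ ∃ e : Module.Basis (Fin 2) ℤ M,
      B (e 0) (e 0) = 2 * a ∧ B (e 0) (e 1) = 0 ∧ B (e 1) (e 1) = 2 * a) := by
  constructor
  · rintro ⟨ρ, hiso, hord⟩
    classical
    -- torsion-freeness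
    have htf : ∀ (c : ℤ) (x : M), c • x = 0 → c = 0 ∨ x = 0 := by
      intro c x h
      by_cases hc : c = 0
      · exact Or.inl hc
      · right
        have hx0 : c • b0.repr x = 0 := by simpa using congrArg b0.repr h
        have hx : b0.repr x = 0 := by
          rcases smul_eq_zero.mp hx0 with h' | h'
          · exact absurd h' hc
          · exact h'
        exact b0.repr.map_eq_zero_iff.mp hx
    -- ρ^4 = 1, ρ^2 ≠ 1
    have h4 : ρ ^ 4 = 1 := by rw [← hord]; exact pow_orderOf_eq_one ρ
    have h2 : ρ ^ 2 ≠ 1 := by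
      intro h
      have := orderOf_dvd_of_pow_eq_one h
      rw [hord] at this
      norm_num at this

    -- ρ² = -1
    have hL4 : (ρ.toLinearMap) ^ 4 = 1 := by
      apply LinearMap.ext; intro v
      have h1 : ((ρ.toLinearMap) ^ 4) v = (⇑ρ)^[4] v := by
        rw [Module.End.pow_apply]; rfl
      have h2' : (ρ ^ 4) v = (⇑ρ)^[4] v := LinearEquiv.pow_apply ρ 4 v
      rw [h1, ← h2', h4]; rfl
    have hL2 : (ρ.toLinearMap) ^ 2 ≠ 1 := by
      intro h
      apply h2
      apply LinearEquiv.ext; intro v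
      have h1 : ((ρ.toLinearMap) ^ 2) v = (⇑ρ)^[2] v := by
        rw [Module.End.pow_apply]; rfl
      have h2' : (ρ ^ 2) v = (⇑ρ)^[2] v := LinearEquiv.pow_apply ρ 2 v
      rw [h2', ← h1, h]; rfl
    have hneg := sq_eq_neg_one_aux b0 ρ.toLinearMap hL4 hL2
    have hρρ : ∀ v : M, ρ (ρ v) = -v := by
      intro v
      have := DFunLike.congr_fun hneg v
      rw [Module.End.pow_apply] at this
      simpa using this
    -- orthogonality
    have hperp : ∀ v : M, B v (ρ v) = 0 := by
      intro v
      have h1 : B (ρ v) (ρ (ρ v)) = B v (ρ v) := hiso v (ρ v)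
      rw [hρρ v, map_neg] at h1
      have h2' : B (ρ v) v = B v (ρ v) := hsymm _ _
      omega
    -- minimal vector
    set P : ℕ → Prop := fun n => ∃ v : M, v ≠ 0 ∧ B v v = n with hP
    have hPex : ∃ n, P n := by
      refine ⟨(B (b0 0) (b0 0)).toNat, b0 0, b0.ne_zero 0, ?_⟩
      rw [Int.toNat_of_nonneg (le_of_lt (hpos _ (b0.ne_zero 0)))]
    obtain ⟨v, hv0, hBv⟩ := Nat.find_spec hPex
    set m : ℤ := B v v with hm
    have hm0 : 0 < m := hpos v hv0
    have hmin : ∀ w : M, w ≠ 0 → m ≤ B w w := by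
      intro w hw
      have hPw : P (B w w).toNat := ⟨w, hw, (Int.toNat_of_nonneg (le_of_lt (hpos w hw))).symm⟩
      have := Nat.find_le (h := hPex) hPw
      rw [hBv]
      have h' : ((Nat.find hPex : ℕ) : ℤ) ≤ ((B w w).toNat : ℤ) := by exact_mod_cast this
      rwa [Int.toNat_of_nonneg (le_of_lt (hpos w hw))] at h'
    have hsm : ∀ (c : ℤ) (x y : M), B (c • x) y = c * B x y := by
      intro c x y; simp
    have hsub : ∀ (x y z : M), B (x - y) z = B x z - B y z := by
      intro x y z; rw [map_sub]; rfl
    have hadd : ∀ (x y z : M), B (x + y) z = B x z + B y z := by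
      intro x y z; rw [map_add]; rfl
    -- basic Gram facts for v, ρ v
    have hvv : B v v = m := rfl
    have hρvρv : B (ρ v) (ρ v) = m := hiso v v
    have hvρv : B v (ρ v) = 0 := hperp v
    have hρvv : B (ρ v) v = 0 := by rw [hsymm]; exact hvρv
    -- spanning: m • w ∈ span of v, ρ v
    have hfr : Module.Finite ℤ M := Module.Finite.of_basis b0
    have hrank : Module.finrank ℤ M = 2 := by
      rw [Module.finrank_eq_card_basis b0, Fintype.card_fin]
    have hkey : ∀ w : M, m • w = (B w v) • v + (B w (ρ v)) • ρ v := by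
      intro w
      set w' : M := m • w - (B w v) • v - (B w (ρ v)) • ρ v with hw'
      have hw'v : B w' v = 0 := by
        rw [hw', hsub, hsub, hsm, hsm, hsm, hvv, hρvv]
        ring
      have hw'ρv : B w' (ρ v) = 0 := by
        rw [hw', hsub, hsub, hsm, hsm, hsm, hvρv, hρvρv]
        ring
      have hw'0 : w' = 0 := by
        by_contra hne
        have hdep : ¬ LinearIndependent ℤ ![v, ρ v, w'] := by
          intro h
          have := h.fintype_card_le_finrank
          rw [hrank, Fintype.card_fin] at this
          omega
        rw [Fintype.linearIndependent_iff] at hdep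
        push_neg at hdep
        obtain ⟨g, hg0, i, hgi⟩ := hdep
        rw [Fin.sum_univ_three] at hg0
        simp only [Matrix.cons_val_zero, Matrix.cons_val_one, Matrix.head_cons,
          Matrix.cons_val_two, Matrix.tail_cons] at hg0
        -- pair with w'
        have hBw' : B w' w' > 0 := hpos w' hne
        have hvw' : B v w' = 0 := by rw [hsymm]; exact hw'v
        have hρvw' : B (ρ v) w' = 0 := by rw [hsymm]; exact hw'ρv
        have hpair : g 0 * B v w' + g 1 * B (ρ v) w' + g 2 * B w' w' = 0 := by
          have := congrArg (fun x : M => B x w') hg0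
          simpa only [map_add, map_smul, LinearMap.add_apply, LinearMap.smul_apply,
            smul_eq_mul, map_zero, LinearMap.zero_apply] using this
        rw [hvw', hρvw'] at hpair
        have hg2 : g 2 = 0 := by
          rcases mul_eq_zero.mp (by linarith [hpair] : g 2 * B w' w' = 0) with h | h
          · exact h
          · linarith [hBw']
        -- pair with v and ρ v
        have hpv : g 0 * B v v + g 1 * B (ρ v) v + g 2 * B w' v = 0 := by
          have := congrArg (fun x : M => B x v) hg0
          simpa only [map_add, map_smul, LinearMap.add_apply, LinearMap.smul_apply,
            smul_eq_mul, map_zero, LinearMap.zero_apply] using this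
        have hpρv : g 0 * B v (ρ v) + g 1 * B (ρ v) (ρ v) + g 2 * B w' (ρ v) = 0 := by
          have := congrArg (fun x : M => B x (ρ v)) hg0
          simpa only [map_add, map_smul, LinearMap.add_apply, LinearMap.smul_apply,
            smul_eq_mul, map_zero, LinearMap.zero_apply] using this
        rw [hvv, hρvv, hw'v, hg2] at hpv
        rw [hvρv, hρvρv, hw'ρv, hg2] at hpρv
        have hg0' : g 0 = 0 := by
          rcases mul_eq_zero.mp (by linarith : g 0 * m = 0) with h | h
          · exact h
          · linarith
        have hg1' : g 1 = 0 := by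
          rcases mul_eq_zero.mp (by linarith : g 1 * m = 0) with h | h
          · exact h
          · linarith
        fin_cases i
        · exact hgi hg0'
        · exact hgi hg1'
        · exact hgi hg2
      have h0 : m • w - ((B w v) • v + (B w (ρ v)) • ρ v) = 0 := by
        rw [← hw'0, hw']; abel
      exact sub_eq_zero.mp h0
    have hsm2 : ∀ (c : ℤ) (x y : M), B x (c • y) = c * B x y := by
      intro c x y; simp
    have hadd2 : ∀ (x y z : M), B x (y + z) = B x y + B x z := by
      intro x y z; rw [map_add]
    -- every vector is an integer combination of v and ρ v
    have hspan : ∀ w : M, ∃ q1 q2 : ℤ, w = q1 • v + q2 • ρ v := by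
      intro w
      obtain ⟨q1, r1, hqr1, hr1⟩ := round_div_aux m hm0 (B w v)
      obtain ⟨q2, r2, hqr2, hr2⟩ := round_div_aux m hm0 (B w (ρ v))
      set u : M := w - q1 • v - q2 • ρ v with hu
      have hkw := hkey w
      rw [hqr1, hqr2] at hkw
      have hmu : m • u = r1 • v + r2 • ρ v := by
        have e1 : (q1 * m + r1) • v = m • (q1 • v) + r1 • v := by
          rw [add_zsmul, mul_comm q1 m, mul_zsmul]
        have e2 : (q2 * m + r2) • ρ v = m • (q2 • ρ v) + r2 • ρ v := by
          rw [add_zsmul, mul_comm q2 m, mul_zsmul]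
        rw [hu, zsmul_sub, zsmul_sub, hkw, e1, e2]
        abel
      have hBu : m * (m * B u u) = m * (r1 * r1 + r2 * r2) := by
        have h1 : B (m • u) (m • u) = m * (m * B u u) := by
          rw [hsm, hsm2]
        have h2 : B (r1 • v + r2 • ρ v) (r1 • v + r2 • ρ v)
            = r1 * (r1 * m) + r2 * (r2 * m) := by
          rw [hadd, hsm, hsm, hadd2, hadd2, hsm2, hsm2, hsm2, hsm2,
            hvv, hvρv, hρvv, hρvρv]
          ring
        rw [hmu] at h1
        rw [h2] at h1
        rw [← h1]; ring
      have hBu' : m * B u u = r1 * r1 + r2 * r2 :=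
        mul_left_cancel₀ (ne_of_gt hm0) hBu
      have hu0 : u = 0 := by
        by_contra hne
        have hmin' := hmin u hne
        have hsq1 : (2 * |r1|) * (2 * |r1|) ≤ m * m :=
          mul_self_le_mul_self (by positivity) hr1
        have hsq2 : (2 * |r2|) * (2 * |r2|) ≤ m * m :=
          mul_self_le_mul_self (by positivity) hr2
        rw [show (2 * |r1|) * (2 * |r1|) = 4 * (|r1| * |r1|) by ring,
          abs_mul_abs_self] at hsq1
        rw [show (2 * |r2|) * (2 * |r2|) = 4 * (|r2| * |r2|) by ring,
          abs_mul_abs_self] at hsq2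
        have hmm : m * m ≤ m * B u u := by
          exact mul_le_mul_of_nonneg_left hmin' (le_of_lt hm0)
        have hpos' : 0 < m * m := mul_pos hm0 hm0
        rw [hBu'] at hmm
        linarith
      refine ⟨q1, q2, ?_⟩
      have : w - (q1 • v + q2 • ρ v) = 0 := by
        rw [← hu0, hu]; abel
      exact sub_eq_zero.mp this
    -- linear independence of v, ρ v
    have hind : LinearIndependent ℤ ![v, ρ v] := by
      rw [LinearIndependent.pair_iff]
      intro s t hst
      have hp1 : s * B v v + t * B (ρ v) v = 0 := by
        have := congrArg (fun x : M => B x v) hst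
        simpa only [map_add, map_smul, LinearMap.add_apply, LinearMap.smul_apply,
          smul_eq_mul, map_zero, LinearMap.zero_apply] using this
      have hp2 : s * B v (ρ v) + t * B (ρ v) (ρ v) = 0 := by
        have := congrArg (fun x : M => B x (ρ v)) hst
        simpa only [map_add, map_smul, LinearMap.add_apply, LinearMap.smul_apply,
          smul_eq_mul, map_zero, LinearMap.zero_apply] using this
      rw [hvv, hρvv] at hp1
      rw [hvρv, hρvρv] at hp2
      constructor
      · rcases mul_eq_zero.mp (by linarith : s * m = 0) with h | h
        · exact h
        · linarith
      · rcases mul_eq_zero.mp (by linarith : t * m = 0) with h | h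
        · exact h
        · linarith
    have hspan' : ⊤ ≤ Submodule.span ℤ (Set.range ![v, ρ v]) := by
      intro w _
      obtain ⟨q1, q2, hw⟩ := hspan w
      rw [hw]
      have h0m : v ∈ Submodule.span ℤ (Set.range ![v, ρ v]) :=
        Submodule.subset_span ⟨0, rfl⟩
      have h1m : ρ v ∈ Submodule.span ℤ (Set.range ![v, ρ v]) :=
        Submodule.subset_span ⟨1, rfl⟩
      exact Submodule.add_mem _
        ((Submodule.span ℤ (Set.range ![v, ρ v])).toAddSubgroup.zsmul_mem h0m q1)
        ((Submodule.span ℤ (Set.range ![v, ρ v])).toAddSubgroup.zsmul_mem h1m q2)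
    set e : Module.Basis (Fin 2) ℤ M := Module.Basis.mk hind hspan' with he
    have he0 : e 0 = v := by rw [he, Module.Basis.mk_apply]; rfl
    have he1 : e 1 = ρ v := by rw [he, Module.Basis.mk_apply]; rfl
    obtain ⟨c, hc⟩ := heven v
    refine ⟨c, by linarith [hvv, hc, hm0], e, ?_, ?_, ?_⟩
    · rw [he0, hvv]; omega
    · rw [he0, he1]; exact hvρv
    · rw [he1, hρvρv]; omega
  · rintro ⟨a, ha, e, h00, h01, h11⟩
    classical
    obtain rfl : ‹Module ℤ M› = AddCommGroup.toIntModule M := Subsingleton.elim _ _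
    set f : M →ₗ[ℤ] M := e.constr ℤ ![e 1, -(e 0)] with hf
    set g : M →ₗ[ℤ] M := e.constr ℤ ![-(e 1), e 0] with hg
    have hfe0 : f (e 0) = e 1 := by rw [hf, Module.Basis.constr_basis]; simp
    have hfe1 : f (e 1) = -(e 0) := by rw [hf, Module.Basis.constr_basis]; simp
    have hge0 : g (e 0) = -(e 1) := by rw [hg, Module.Basis.constr_basis]; simp
    have hge1 : g (e 1) = e 0 := by rw [hg, Module.Basis.constr_basis]; simp
    have hfin : ∀ i : Fin 2, i = 0 ∨ i = 1 := by decide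
    have hfg : f ∘ₗ g = LinearMap.id := by
      apply e.ext; intro i
      rcases hfin i with h | h <;> subst h <;> simp [hge0, hge1, hfe0, hfe1]
    have hgf : g ∘ₗ f = LinearMap.id := by
      apply e.ext; intro i
      rcases hfin i with h | h <;> subst h <;> simp [hge0, hge1, hfe0, hfe1]
    set ρ : M ≃ₗ[ℤ] M := LinearEquiv.ofLinear f g hfg hgf with hρ
    have hρ0 : ρ (e 0) = e 1 := hfe0
    have hρ1 : ρ (e 1) = -(e 0) := hfe1
    refine ⟨ρ, ?_, ?_⟩
    · have hBeq : B.compl₁₂ (ρ : M →ₗ[ℤ] M) (ρ : M →ₗ[ℤ] M) = B := by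
        apply LinearMap.ext_basis e e
        intro i j
        rcases hfin i with h | h <;> rcases hfin j with h' | h' <;> subst h <;> subst h' <;>
          simp [LinearMap.compl₁₂_apply, hρ0, hρ1, h00, h01, h11, hsymm (e 1) (e 0)]
      intro v w
      exact DFunLike.congr_fun (DFunLike.congr_fun hBeq v) w
    · have hsq : ∀ v : M, (ρ ^ 2) v = -v := by
        have hff : f ∘ₗ f = -LinearMap.id := by
          apply e.ext; intro i
          rcases hfin i with h | h <;> subst h <;> simp [hfe0, hfe1, map_neg]
        intro v
        have := DFunLike.congr_fun hff v
        simpa [LinearEquiv.pow_apply, Function.iterate_succ, Function.iterate_zero, hρ, LinearEquiv.ofLinear_apply] using this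
      have h2 : ρ ^ 2 ≠ 1 := by
        intro h
        have h0 := hsq (e 0)
        rw [h] at h0
        have h1 := congrArg (fun m => e.repr m 0) h0
        simp at h1
      have h4 : ρ ^ 4 = 1 := by
        apply DFunLike.ext; intro v
        have : (ρ ^ 4) v = (ρ ^ 2) ((ρ ^ 2) v) := by
          rw [(by norm_num : (4:ℕ) = 2 + 2), pow_add]
          rfl
        rw [this, hsq, hsq v, neg_neg]
        rfl
      have hdvd := orderOf_dvd_of_pow_eq_one h4
      rcases (Nat.dvd_prime_pow Nat.prime_two).mp
          ((by norm_num : (4:ℕ) = 2 ^ 2) ▸ hdvd) with ⟨k, hk2, hkeq⟩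
      interval_cases k
      · rw [pow_zero] at hkeq
        have : ρ = 1 := orderOf_eq_one_iff.mp hkeq
        exact absurd (by rw [this]; simp : ρ ^ 2 = 1) h2
      · rw [pow_one] at hkeq
        have : ρ ^ 2 = 1 := by rw [← hkeq]; exact pow_orderOf_eq_one ρ
        exact absurd this h2
      · rw [hkeq]; norm_num
end

section
/- Let ι be an involution acting by isometries on an even unimodular lattice L, and let L⁺ = L^ι be the invariant sublattice. Then the discriminant group A = (L⁺)*/L⁺ of L⁺ is annihilated by 2; in particular its order is a power of 2. -/
/-- Let `ι` be an involutive isometry of an even unimodular lattice `L`, with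
nondegenerate invariant sublattice `L⁺ = ker (ι - 1)`. Then the discriminant group
`(L⁺)*/L⁺` is annihilated by `2`: identifying `(L⁺)*` with `Hom(L⁺, ℤ)` via the form,
twice any functional on `L⁺` is represented by pairing against an element of `L⁺`. -/
theorem stmt_10 (L : Type*) [AddCommGroup L] [Module ℤ L] {r : ℕ} (b0 : Module.Basis (Fin r) ℤ L)
    (B : L →ₗ[ℤ] L →ₗ[ℤ] ℤ)
    (hsymm : ∀ v w : L, B v w = B w v)
    (heven : ∀ v : L, Even (B v v))
    (hunimod : Function.Bijective fun v : L => (B v : L →ₗ[ℤ] ℤ))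
    (ι : L ≃ₗ[ℤ] L)
    (hiso : ∀ v w : L, B (ι v) (ι w) = B v w)
    (hinv : ∀ x : L, ι (ι x) = x)
    (hnd : ∀ x : L, ι x = x → (∀ m : L, ι m = m → B x m = 0) → x = 0) :
    ∀ φ : (LinearMap.ker (ι.toLinearMap - LinearMap.id)) →ₗ[ℤ] ℤ,
      ∃ y : LinearMap.ker (ι.toLinearMap - LinearMap.id),
        ∀ m : LinearMap.ker (ι.toLinearMap - LinearMap.id),
          2 * φ m = B (y : L) (m : L) := by
  intro φ
  have hmem : ∀ v : L, v + ι v ∈ LinearMap.ker (ι.toLinearMap - LinearMap.id) := by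
    intro v
    simp [LinearMap.mem_ker, LinearMap.sub_apply, map_add, hinv v]
  -- the auxiliary functional ψ v = φ (v + ι v), first as an additive hom
  let ψ₀ : L →+ ℤ := AddMonoidHom.mk' (fun v => φ ⟨v + ι v, hmem v⟩) (by
    intro a b
    have h : (⟨a + b + ι (a + b), hmem (a + b)⟩ :
        LinearMap.ker (ι.toLinearMap - LinearMap.id)) =
        ⟨a + ι a, hmem a⟩ + ⟨b + ι b, hmem b⟩ := by
      apply Subtype.ext
      show a + b + ι (a + b) = (a + ι a) + (b + ι b)
      rw [map_add]
      abel
    exact (congrArg φ h).trans (map_add φ _ _))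
  -- then as a ℤ-linear map (bridging the two `SMul ℤ L` instances)
  let ψ : L →ₗ[ℤ] ℤ :=
    { toFun := ψ₀
      map_add' := map_add ψ₀
      map_smul' := by
        intro c a
        simp only [RingHom.id_apply]
        have h2 := Int.cast_smul_eq_zsmul (R := ℤ) (M := L) c a
        have h3 := Int.cast_smul_eq_zsmul (R := ℤ) (M := ℤ) c (ψ₀ a)
        rw [Int.cast_id] at h2 h3
        rw [h2, h3]
        exact map_zsmul ψ₀ c a }
  have hψ : ∀ v : L, ψ v = φ ⟨v + ι v, hmem v⟩ := fun v => rfl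
  obtain ⟨x, hx⟩ := hunimod.surjective ψ
  have hx' : ∀ v : L, B x v = ψ v := fun v => by
    rw [show (B x : L →ₗ[ℤ] ℤ) = ψ from hx]
  -- x is ι-invariant
  have hxinv : ι x = x := by
    apply hunimod.injective
    show (B (ι x) : L →ₗ[ℤ] ℤ) = B x
    ext v
    have h1 : B (ι x) v = B x (ι v) := by
      conv_lhs => rw [← hinv v]
      exact hiso x (ι v)
    have h2 : B x (ι v) = B x v := by
      rw [hx' (ι v), hx' v, hψ, hψ]
      refine congrArg φ (Subtype.ext ?_)
      show ι v + ι (ι v) = v + ι v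
      rw [hinv v]
      abel
    rw [h1, h2]
  refine ⟨⟨x, ?_⟩, ?_⟩
  · simp [LinearMap.mem_ker, LinearMap.sub_apply, hxinv]
  · intro m
    have hminv : ι (m : L) = (m : L) := by
      have := m.2
      simp only [LinearMap.mem_ker, LinearMap.sub_apply, LinearMap.id_apply,
        LinearEquiv.coe_coe, sub_eq_zero] at this
      exact this
    have h : (⟨(m : L) + ι (m : L), hmem m⟩ :
        LinearMap.ker (ι.toLinearMap - LinearMap.id)) = m + m := by
      apply Subtype.ext
      show (m : L) + ι (m : L) = (m : L) + (m : L)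
      rw [hminv]
    have e2 : ψ (m : L) = 2 * φ m := by
      rw [hψ, congrArg φ h, map_add]
      ring
    rw [show B x (m : L) = ψ (m : L) from hx' m, e2]
end

section
/- Up to isometry, the positive definite even lattices of rank 2 and determinant 36 are exactly the three lattices with Gram matrices [[2,0],[0,18]], [[6,0],[0,6]] and [[4,2],[2,10]]. -/
/-- `G` is a symmetric, positive definite, even matrix of determinant `d`
(the Gram matrix of a positive definite even rank-2 lattice of determinant `d`). -/
def IsEvenPosDefOfDet (d : ℤ) (G : Matrix (Fin 2) (Fin 2) ℤ) : Prop :=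
  G.IsSymm ∧ (∀ v : Fin 2 → ℤ, v ≠ 0 → 0 < dotProduct v (G.mulVec v)) ∧
    (∀ i, Even (G i i)) ∧ G.det = d

/-- Two Gram matrices give isometric lattices iff they are `ℤ`-congruent. -/
def MatCongruent (G H : Matrix (Fin 2) (Fin 2) ℤ) : Prop :=
  ∃ P : Matrix (Fin 2) (Fin 2) ℤ, IsUnit P.det ∧ P.transpose * G * P = H

namespace Stmt14Aux

lemma matmul (p q r s a b c : ℤ) :
    (!![p,q;r,s] : Matrix (Fin 2) (Fin 2) ℤ).transpose * !![a,b;b,c] * !![p,q;r,s]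
      = !![a*p^2+2*b*p*r+c*r^2, a*p*q+b*(p*s+q*r)+c*r*s;
           a*p*q+b*(p*s+q*r)+c*r*s, a*q^2+2*b*q*s+c*s^2] := by
  rw [show (!![p,q;r,s] : Matrix (Fin 2) (Fin 2) ℤ).transpose = !![p,r;q,s] by
    ext i j; fin_cases i <;> fin_cases j <;> rfl]
  rw [Matrix.mul_fin_two, Matrix.mul_fin_two]
  congr 1 <;> ring

lemma cong_refl (G : Matrix (Fin 2) (Fin 2) ℤ) : MatCongruent G G :=
  ⟨1, by simp, by simp⟩

lemma cong_trans {G H K : Matrix (Fin 2) (Fin 2) ℤ}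
    (h1 : MatCongruent G H) (h2 : MatCongruent H K) : MatCongruent G K := by
  obtain ⟨P, hP, hPe⟩ := h1
  obtain ⟨Q, hQ, hQe⟩ := h2
  refine ⟨P * Q, by simpa [Matrix.det_mul] using hP.mul hQ, ?_⟩
  rw [Matrix.transpose_mul]
  rw [← hQe, ← hPe]
  noncomm_ring

lemma cong_swap (a b c : ℤ) : MatCongruent !![a,b;b,c] !![c,-b;-b,a] := by
  refine ⟨!![0,1;-1,0], ?_, ?_⟩
  · rw [Matrix.det_fin_two_of]; norm_num
  · rw [matmul]; congr 1 <;> ring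

lemma cong_flip (a b c : ℤ) : MatCongruent !![a,b;b,c] !![a,-b;-b,c] := by
  refine ⟨!![1,0;0,-1], ?_, ?_⟩
  · rw [Matrix.det_fin_two_of]; norm_num
  · rw [matmul]; congr 1 <;> ring

lemma cong_translate (a b c n : ℤ) :
    MatCongruent !![a,b;b,c] !![a, b+n*a; b+n*a, c+2*n*b+n^2*a] := by
  refine ⟨!![1,n;0,1], ?_, ?_⟩
  · rw [Matrix.det_fin_two_of]; norm_num
  · rw [matmul]; congr 1 <;> ring

/-- Lagrange reduction. -/
lemma reduce : ∀ N : ℕ, ∀ a b c : ℤ, 0 < a → 0 < c → a*c - b*b = 36 →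
    Even a → Even c → a + c ≤ (N : ℤ) →
    ∃ a' b' c' : ℤ, MatCongruent !![a,b;b,c] !![a',b';b',c'] ∧ 0 < a' ∧
      a'*c' - b'*b' = 36 ∧ Even a' ∧ Even c' ∧ 0 ≤ 2*b' ∧ 2*b' ≤ a' ∧ a' ≤ c' := by
  intro N
  induction N with
  | zero => intro a b c ha hc _ _ _ hN; exfalso; omega
  | succ N ih =>
    intro a b c ha hc hdet hea hec hN
    -- first normalize so that first diagonal entry ≤ second
    obtain ⟨A, B, C, hcong0, hA, hC, hAC, hdet0, heA, heC, hsum⟩ :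
        ∃ A B C : ℤ, MatCongruent !![a,b;b,c] !![A,B;B,C] ∧ 0 < A ∧ 0 < C ∧ A ≤ C ∧
          A*C - B*B = 36 ∧ Even A ∧ Even C ∧ A + C = a + c := by
      rcases le_or_gt a c with h | h
      · exact ⟨a, b, c, cong_refl _, ha, hc, h, hdet, hea, hec, rfl⟩
      · exact ⟨c, -b, a, cong_swap a b c, hc, ha, h.le,
          by linear_combination hdet, hec, hea, by ring⟩
    by_cases hb2 : 2 * |B| ≤ A
    · rcases le_or_gt 0 B with hB | hB
      · exact ⟨A, B, C, hcong0, hA, hdet0, heA, heC, by omega,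
          by rw [abs_of_nonneg hB] at hb2; omega, hAC⟩
      · refine ⟨A, -B, C, cong_trans hcong0 (cong_flip A B C), hA,
          by linear_combination hdet0, heA, heC, by omega, ?_, hAC⟩
        rw [abs_of_neg hB] at hb2; omega
    · -- translate to shrink B
      push_neg at hb2
      set b1 : ℤ := B % A with hb1def
      have hAne : A ≠ 0 := ne_of_gt hA
      have h0 : 0 ≤ b1 := Int.emod_nonneg B hAne
      have h1 : b1 < A := Int.emod_lt_of_pos B hA
      have hbeq : b1 = B + (-(B / A)) * A := by
        rw [hb1def]; rw [Int.emod_def]; ring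
      obtain ⟨n, b2, hb2eq, hb2abs⟩ :
          ∃ n b2 : ℤ, b2 = B + n * A ∧ 2 * |b2| ≤ A := by
        rcases le_or_gt (2 * b1) A with h | h
        · exact ⟨-(B / A), b1, hbeq, by rw [abs_of_nonneg h0]; omega⟩
        · refine ⟨-(B / A) - 1, b1 - A, by rw [hbeq]; ring, ?_⟩
          have : b1 - A ≤ 0 := by omega
          rw [abs_of_nonpos this]; omega
      set c2 : ℤ := C + 2*n*B + n^2*A with hc2def
      have hdet2 : A * c2 - b2 * b2 = 36 := by
        rw [hc2def, hb2eq]; linear_combination hdet0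
      have hc2pos : 0 < c2 := by nlinarith [mul_self_nonneg b2]
      have hlt : |b2| < |B| := by omega
      have hsq : b2 * b2 < B * B := by
        calc b2 * b2 = |b2| * |b2| := (abs_mul_abs_self b2).symm
          _ < |B| * |B| := by
              apply mul_lt_mul' hlt.le hlt (abs_nonneg _) (lt_of_le_of_lt (abs_nonneg _) hlt)
          _ = B * B := abs_mul_abs_self B
      have hc2lt : c2 < C := by nlinarith
      have heC2 : Even c2 := by
        obtain ⟨x, hx⟩ := heA
        obtain ⟨y, hy⟩ := heC
        exact ⟨y + n*B + n^2*x, by rw [hc2def, hy, hx]; ring⟩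
      have hcong1 : MatCongruent !![a,b;b,c] !![A, b2; b2, c2] := by
        refine cong_trans hcong0 ?_
        have := cong_translate A B C n
        rwa [← hb2eq, ← hc2def] at this
      obtain ⟨a', b', c', hc', h1', h2', h3', h4', h5', h6', h7'⟩ :=
        ih A b2 c2 hA hc2pos hdet2 heA heC2 (by omega)
      exact ⟨a', b', c', cong_trans hcong1 hc', h1', h2', h3', h4', h5', h6', h7'⟩

lemma vne (v : Fin 2 → ℤ) (h : v ≠ 0) : v 0 ≠ 0 ∨ v 1 ≠ 0 := by
  by_contra h'
  push_neg at h'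
  apply h
  funext i
  fin_cases i
  · exact h'.1
  · exact h'.2

lemma no1 (p r : ℤ) (h : 2*p^2 + 18*r^2 = 6) : False := by
  have h2 : -2 ≤ p := by nlinarith [sq_nonneg (p+3), sq_nonneg r]
  have h3 : p ≤ 2 := by nlinarith [sq_nonneg (p-3), sq_nonneg r]
  have h4 : -1 ≤ r := by nlinarith [sq_nonneg (r+2), sq_nonneg p]
  have h5 : r ≤ 1 := by nlinarith [sq_nonneg (r-2), sq_nonneg p]
  interval_cases p <;> interval_cases r <;> norm_num at h

lemma no2 (p r : ℤ) (h : 2*p^2 + 18*r^2 = 4) : False := by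
  have h2 : -2 ≤ p := by nlinarith [sq_nonneg (p+3), sq_nonneg r]
  have h3 : p ≤ 2 := by nlinarith [sq_nonneg (p-3), sq_nonneg r]
  have h4 : -1 ≤ r := by nlinarith [sq_nonneg (r+2), sq_nonneg p]
  have h5 : r ≤ 1 := by nlinarith [sq_nonneg (r-2), sq_nonneg p]
  interval_cases p <;> interval_cases r <;> norm_num at h

lemma no3 (p r : ℤ) (h : 6*p^2 + 6*r^2 = 4) : False := by
  have h2 : -1 ≤ p := by nlinarith [sq_nonneg (p+2), sq_nonneg r]
  have h3 : p ≤ 1 := by nlinarith [sq_nonneg (p-2), sq_nonneg r]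
  have h4 : -1 ≤ r := by nlinarith [sq_nonneg (r+2), sq_nonneg p]
  have h5 : r ≤ 1 := by nlinarith [sq_nonneg (r-2), sq_nonneg p]
  interval_cases p <;> interval_cases r <;> norm_num at h

lemma epd (a b c : ℤ) (ha : 0 < a) (hd : 0 < a*c - b*b) (hea : Even a) (hec : Even c)
    (hdet : a*c - b*b = 36) (h36 : (36:ℤ) = 36) :
    IsEvenPosDefOfDet 36 !![a,b;b,c] := by
  refine ⟨?_, ?_, ?_, ?_⟩
  · show (!![a,b;b,c] : Matrix (Fin 2) (Fin 2) ℤ).transpose = _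
    ext i j; fin_cases i <;> fin_cases j <;> rfl
  · intro v hv
    have hcomp : dotProduct v ((!![a,b;b,c] : Matrix (Fin 2) (Fin 2) ℤ).mulVec v)
        = a * (v 0)^2 + 2*b*(v 0)*(v 1) + c*(v 1)^2 := by
      simp [dotProduct, Matrix.mulVec, Fin.sum_univ_two]
      ring
    rw [hcomp]
    by_cases h1 : v 1 = 0
    · have h0 : v 0 ≠ 0 := (vne v hv).resolve_right (by simp [h1])
      have h2 : 0 < (v 0)^2 := by positivity
      rw [h1]
      nlinarith [mul_pos ha h2]
    · have h2 : 0 < (v 1)^2 := by positivity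
      have hQ : 0 < a * (a * (v 0)^2 + 2*b*(v 0)*(v 1) + c*(v 1)^2) := by
        nlinarith [sq_nonneg (a * v 0 + b * v 1), mul_pos hd h2]
      nlinarith [hQ]
  · intro i; fin_cases i
    · simpa using hea
    · simpa using hec
  · rw [Matrix.det_fin_two_of]; linarith [hdet]

end Stmt14Aux

open Stmt14Aux in
/-- Up to isometry, the positive definite even lattices of rank 2 and determinant 36 are
exactly the three lattices with Gram matrices `[[2,0],[0,18]]`, `[[6,0],[0,6]]` and
`[[4,2],[2,10]]`. -/
theorem stmt_14 :
    IsEvenPosDefOfDet 36 !![2, 0; 0, 18] ∧ IsEvenPosDefOfDet 36 !![6, 0; 0, 6] ∧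
    IsEvenPosDefOfDet 36 !![4, 2; 2, 10] ∧
    (∀ G : Matrix (Fin 2) (Fin 2) ℤ, IsEvenPosDefOfDet 36 G →
      MatCongruent G !![2, 0; 0, 18] ∨ MatCongruent G !![6, 0; 0, 6] ∨
        MatCongruent G !![4, 2; 2, 10]) ∧
    ¬ MatCongruent !![2, 0; 0, 18] !![6, 0; 0, 6] ∧
    ¬ MatCongruent !![2, 0; 0, 18] !![4, 2; 2, 10] ∧
    ¬ MatCongruent !![6, 0; 0, 6] !![4, 2; 2, 10] := by
  refine ⟨epd 2 0 18 (by norm_num) (by norm_num) ⟨1, by norm_num⟩ ⟨9, by norm_num⟩ (by norm_num) rfl,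
    epd 6 0 6 (by norm_num) (by norm_num) ⟨3, by norm_num⟩ ⟨3, by norm_num⟩ (by norm_num) rfl,
    epd 4 2 10 (by norm_num) (by norm_num) ⟨2, by norm_num⟩ ⟨5, by norm_num⟩ (by norm_num) rfl,
    ?_, ?_, ?_, ?_⟩
  · -- classification
    intro G hG
    obtain ⟨hsymm, hpos, heven, hdet⟩ := hG
    set a : ℤ := G 0 0 with hadef
    set b : ℤ := G 0 1 with hbdef
    set c : ℤ := G 1 1 with hcdef
    have hb10 : G 1 0 = b := hsymm.apply 0 1
    have hGeq : G = !![a, b; b, c] := by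
      conv_lhs => rw [Matrix.eta_fin_two G]
      rw [hb10]
    have ha : 0 < a := by
      have := hpos ![1, 0] (by
        intro h
        have := congrFun h 0
        simp at this)
      simpa [dotProduct, Matrix.mulVec, Fin.sum_univ_two] using this
    have hc : 0 < c := by
      have := hpos ![0, 1] (by
        intro h
        have := congrFun h 1
        simp at this)
      simpa [dotProduct, Matrix.mulVec, Fin.sum_univ_two] using this
    have hdet' : a * c - b * b = 36 := by
      rw [Matrix.det_fin_two, hb10] at hdet
      linarith [hdet]
    have hea : Even a := heven 0
    have hec : Even c := heven 1
    obtain ⟨a', b', c', hcong, ha', hdet'', hea', hec', hb'0, hb'a, hac'⟩ :=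
      reduce (a + c).toNat a b c ha hc hdet' hea hec (by omega)
    have h6 : a' ≤ 6 := by
      nlinarith [mul_le_mul_of_nonneg_left hac' ha'.le, mul_self_nonneg b']
    have key : (a' = 2 ∧ b' = 0 ∧ c' = 18) ∨ (a' = 6 ∧ b' = 0 ∧ c' = 6) ∨
        (a' = 4 ∧ b' = 2 ∧ c' = 10) := by
      obtain ⟨x, hx⟩ := hea'
      obtain ⟨y, hy⟩ := hec'
      have hb3 : b' ≤ 3 := by omega
      have hb00 : 0 ≤ b' := by omega
      interval_cases a' <;> interval_cases b' <;> omega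
    rw [hGeq]
    rcases key with ⟨h1, h2, h3⟩ | ⟨h1, h2, h3⟩ | ⟨h1, h2, h3⟩
    · left; subst h1; subst h2; subst h3; exact hcong
    · right; left; subst h1; subst h2; subst h3; exact hcong
    · right; right; subst h1; subst h2; subst h3; exact hcong
  · rintro ⟨P, -, hP⟩
    rw [Matrix.eta_fin_two P, matmul] at hP
    have h00 := congrFun (congrFun hP 0) 0
    simp at h00
    exact no1 (P 0 0) (P 1 0) h00
  · rintro ⟨P, -, hP⟩
    rw [Matrix.eta_fin_two P, matmul] at hP
    have h00 := congrFun (congrFun hP 0) 0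
    simp at h00
    exact no2 (P 0 0) (P 1 0) h00
  · rintro ⟨P, -, hP⟩
    rw [Matrix.eta_fin_two P, matmul] at hP
    have h00 := congrFun (congrFun hP 0) 0
    simp at h00
    exact no3 (P 0 0) (P 1 0) h00
end

section
/- Up to isometry, the positive definite even lattices of rank 2 and determinant 75 are exactly the three lattices with Gram matrices [[2,1],[1,38]], [[6,3],[3,14]] and [[10,5],[5,10]]. -/
lemma congr_trans' {G H K : Matrix (Fin 2) (Fin 2) ℤ}
    (h1 : MatCongruent G H) (h2 : MatCongruent H K) : MatCongruent G K := by
  obtain ⟨P, hP, hPe⟩ := h1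
  obtain ⟨Q, hQ, hQe⟩ := h2
  refine ⟨P * Q, by rw [Matrix.det_mul]; exact hP.mul hQ, ?_⟩
  rw [Matrix.transpose_mul, ← hQe, ← hPe]
  noncomm_ring

lemma congr_symm' {G H : Matrix (Fin 2) (Fin 2) ℤ}
    (h : MatCongruent G H) : MatCongruent H G := by
  obtain ⟨P, hP, hPe⟩ := h
  refine ⟨P⁻¹, P.isUnit_nonsing_inv_det hP, ?_⟩
  rw [← hPe]
  have h1 : P * P⁻¹ = 1 := Matrix.mul_nonsing_inv P hP
  calc P⁻¹.transpose * (P.transpose * G * P) * P⁻¹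
      = (P * P⁻¹).transpose * G * (P * P⁻¹) := by
        rw [Matrix.transpose_mul]; noncomm_ring
    _ = G := by rw [h1]; simp

lemma congr_shear' (a b c n : ℤ) :
    MatCongruent !![a, b; b, c] !![a, b + n*a; b + n*a, a*n*n + 2*b*n + c] := by
  refine ⟨!![1, n; 0, 1], by simp [Matrix.det_fin_two_of], ?_⟩
  ext i j
  fin_cases i <;> fin_cases j <;>
    simp [Matrix.mul_apply, Fin.sum_univ_succ, Matrix.transpose_apply] <;> ring

lemma congr_swap' (a b c : ℤ) :
    MatCongruent !![a, b; b, c] !![c, b; b, a] := by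
  refine ⟨!![0, 1; 1, 0], by simp [Matrix.det_fin_two_of], ?_⟩
  ext i j
  fin_cases i <;> fin_cases j <;>
    simp [Matrix.mul_apply, Fin.sum_univ_succ, Matrix.transpose_apply]

lemma congr_negb' (a b c : ℤ) :
    MatCongruent !![a, b; b, c] !![a, -b; -b, c] := by
  refine ⟨!![1, 0; 0, -1], by simp [Matrix.det_fin_two_of], ?_⟩
  ext i j
  fin_cases i <;> fin_cases j <;>
    simp [Matrix.mul_apply, Fin.sum_univ_succ, Matrix.transpose_apply]

lemma enum75 (a b c : ℤ) (ha : 0 < a) (hb0 : 0 ≤ b) (hba : 2*b ≤ a) (hac : a ≤ c)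
    (hdet : a*c - b*b = 75) (hea : Even a) (hec : Even c) :
    (a = 2 ∧ b = 1 ∧ c = 38) ∨ (a = 6 ∧ b = 3 ∧ c = 14) ∨ (a = 10 ∧ b = 5 ∧ c = 10) := by
  have hb2 : 4*(b*b) ≤ a*a := by nlinarith
  have hac' : a*a ≤ a*c := by nlinarith
  have h100 : a*a ≤ 100 := by nlinarith
  have h10 : a ≤ 10 := by nlinarith
  obtain ⟨k, hk⟩ := hea
  obtain ⟨j, hj⟩ := hec
  have hb5 : b ≤ 5 := by omega
  interval_cases a <;> interval_cases b <;> omega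

def Tri (G : Matrix (Fin 2) (Fin 2) ℤ) : Prop :=
  MatCongruent G !![2, 1; 1, 38] ∨ MatCongruent G !![6, 3; 3, 14] ∨
    MatCongruent G !![10, 5; 5, 10]

lemma tri_of_congr {G H : Matrix (Fin 2) (Fin 2) ℤ} (h : MatCongruent G H)
    (hH : Tri H) : Tri G := by
  rcases hH with h1 | h1 | h1
  · exact Or.inl (congr_trans' h h1)
  · exact Or.inr (Or.inl (congr_trans' h h1))
  · exact Or.inr (Or.inr (congr_trans' h h1))

lemma key75 : ∀ N : ℕ, ∀ a b c : ℤ, a.natAbs ≤ N → 0 < a →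
    a*c - b*b = 75 → Even a → Even c → Tri !![a, b; b, c] := by
  intro N
  induction N with
  | zero => intro a b c hN ha _ _ _; omega
  | succ N ih =>
    intro a b c hN ha hdet hea hec
    have har : 0 ≤ b % a := Int.emod_nonneg b (ne_of_gt ha)
    have har2 : b % a < a := Int.emod_lt_of_pos b ha
    have hmod : b % a = b - a * (b / a) := Int.emod_def b a
    obtain ⟨n, hlow, hhigh⟩ : ∃ n : ℤ, -a ≤ 2*(b + n*a) ∧ 2*(b + n*a) ≤ a := by
      by_cases hc : 2 * (b % a) ≤ a
      · exact ⟨-(b / a), by constructor <;> nlinarith [har, hc]⟩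
      · exact ⟨-(b / a) - 1, by constructor <;> nlinarith [har2, hc]⟩
    set b' := b + n*a with hb'
    set c' := a*n*n + 2*b*n + c with hc'
    have hcong1 : MatCongruent !![a, b; b, c] !![a, b'; b', c'] := congr_shear' a b c n
    have hdet' : a*c' - b'*b' = 75 := by rw [hb', hc']; linear_combination hdet
    have hec' : Even c' := by
      obtain ⟨k, hk⟩ := hea; obtain ⟨j, hj⟩ := hec
      exact ⟨k*n*n + b*n + j, by rw [hc', hk, hj]; ring⟩
    have hc'pos : 0 < c' := by nlinarith [mul_self_nonneg b']
    by_cases hlt : c' < a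
    · have hcong2 : MatCongruent !![a, b; b, c] !![c', b'; b', a] :=
        congr_trans' hcong1 (congr_swap' a b' c')
      have hrec : Tri !![c', b'; b', a] := by
        apply ih c' b' a (by omega) hc'pos (by linarith [hdet']) hec' hea
      exact tri_of_congr hcong2 hrec
    · push_neg at hlt
      by_cases hbs : 0 ≤ b'
      · have := enum75 a b' c' ha hbs (by omega) hlt hdet' hea hec'
        rcases this with ⟨h1, h2, h3⟩ | ⟨h1, h2, h3⟩ | ⟨h1, h2, h3⟩ <;>
          simp only [h1, h2, h3] at hcong1 ⊢
        · exact Or.inl hcong1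
        · exact Or.inr (Or.inl hcong1)
        · exact Or.inr (Or.inr hcong1)
      · push_neg at hbs
        have hcong2 : MatCongruent !![a, b; b, c] !![a, -b'; -b', c'] :=
          congr_trans' hcong1 (congr_negb' a b' c')
        have := enum75 a (-b') c' ha (by omega) (by omega) hlt
          (by linear_combination hdet') hea hec'
        rcases this with ⟨h1, h2, h3⟩ | ⟨h1, h2, h3⟩ | ⟨h1, h2, h3⟩ <;>
          simp only [h1, h2, h3] at hcong2 ⊢
        · exact Or.inl hcong2
        · exact Or.inr (Or.inl hcong2)
        · exact Or.inr (Or.inr hcong2)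

lemma not_congr_12' : ¬ MatCongruent !![2, 1; 1, 38] !![6, 3; 3, 14] := by
  intro h
  obtain ⟨P, _, hPe⟩ := congr_symm' h
  have h00 := congrFun (congrFun hPe 0) 0
  simp [Matrix.mul_apply, Fin.sum_univ_succ, Matrix.transpose_apply] at h00
  set p := P 0 0; set r := P 1 0
  have h4 : 3*(2*p+r)^2 + 25*r^2 = 4 := by linear_combination 2*h00
  rcases eq_or_ne r 0 with hr | hr
  · rcases eq_or_ne p 0 with hp | hp
    · rw [hr, hp] at h4; norm_num at h4
    · nlinarith [mul_self_pos.mpr hp, h4]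
  · nlinarith [mul_self_pos.mpr hr, sq_nonneg (2*p+r)]

lemma not_congr_13' : ¬ MatCongruent !![2, 1; 1, 38] !![10, 5; 5, 10] := by
  intro h
  obtain ⟨P, _, hPe⟩ := congr_symm' h
  have h00 := congrFun (congrFun hPe 0) 0
  simp [Matrix.mul_apply, Fin.sum_univ_succ, Matrix.transpose_apply] at h00
  set p := P 0 0; set r := P 1 0
  have h5 : 10*(p*p + p*r + r*r) = 2 := by linear_combination h00
  omega

lemma not_congr_23' : ¬ MatCongruent !![6, 3; 3, 14] !![10, 5; 5, 10] := by
  intro h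
  obtain ⟨P, _, hPe⟩ := congr_symm' h
  have h00 := congrFun (congrFun hPe 0) 0
  simp [Matrix.mul_apply, Fin.sum_univ_succ, Matrix.transpose_apply] at h00
  set p := P 0 0; set r := P 1 0
  have h5 : 10*(p*p + p*r + r*r) = 6 := by linear_combination h00
  omega

lemma posdef_helper (a b c : ℤ) (ha : 0 < a) (hd : 0 < a*c - b*b) :
    ∀ v : Fin 2 → ℤ, v ≠ 0 →
      0 < dotProduct v ((!![a, b; b, c]).mulVec v) := by
  intro v hv
  have hx : v 0 ≠ 0 ∨ v 1 ≠ 0 := by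
    by_contra hcn; push_neg at hcn
    exact hv (funext fun i => by fin_cases i <;> simp [hcn.1, hcn.2])
  have hval : dotProduct v ((!![a, b; b, c]).mulVec v) =
      a*(v 0)^2 + 2*b*(v 0)*(v 1) + c*(v 1)^2 := by
    simp [dotProduct, Matrix.mulVec, Fin.sum_univ_succ]; ring
  rw [hval]
  rcases eq_or_ne (v 1) 0 with hy | hy
  · have hx0 : v 0 ≠ 0 := by tauto
    rw [hy]
    nlinarith [mul_self_pos.mpr hx0]
  · nlinarith [mul_self_pos.mpr hy, sq_nonneg (a*(v 0) + b*(v 1))]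

lemma isEPD (a b c : ℤ) (ha : 0 < a) (hea : Even a) (hec : Even c)
    (hdet : a*c - b*b = 75) : IsEvenPosDefOfDet 75 !![a, b; b, c] := by
  refine ⟨?_, posdef_helper a b c ha (by omega), ?_, ?_⟩
  · ext i j; fin_cases i <;> fin_cases j <;> simp [Matrix.transpose_apply]
  · intro i
    fin_cases i
    · simpa using hea
    · simpa using hec
  · simp [Matrix.det_fin_two_of]; linarith

/-- Up to isometry, the positive definite even lattices of rank 2 and determinant 75 are
exactly the three lattices with Gram matrices `[[2,1],[1,38]]`, `[[6,3],[3,14]]` and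
`[[10,5],[5,10]]`. -/
theorem stmt_15 :
    IsEvenPosDefOfDet 75 !![2, 1; 1, 38] ∧ IsEvenPosDefOfDet 75 !![6, 3; 3, 14] ∧
    IsEvenPosDefOfDet 75 !![10, 5; 5, 10] ∧
    (∀ G : Matrix (Fin 2) (Fin 2) ℤ, IsEvenPosDefOfDet 75 G →
      MatCongruent G !![2, 1; 1, 38] ∨ MatCongruent G !![6, 3; 3, 14] ∨
        MatCongruent G !![10, 5; 5, 10]) ∧
    ¬ MatCongruent !![2, 1; 1, 38] !![6, 3; 3, 14] ∧
    ¬ MatCongruent !![2, 1; 1, 38] !![10, 5; 5, 10] ∧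
    ¬ MatCongruent !![6, 3; 3, 14] !![10, 5; 5, 10] := by
  refine ⟨isEPD 2 1 38 (by norm_num) ⟨1, rfl⟩ ⟨19, rfl⟩ (by norm_num),
    isEPD 6 3 14 (by norm_num) ⟨3, rfl⟩ ⟨7, rfl⟩ (by norm_num),
    isEPD 10 5 10 (by norm_num) ⟨5, rfl⟩ ⟨5, rfl⟩ (by norm_num),
    ?_, not_congr_12', not_congr_13', not_congr_23'⟩
  rintro G ⟨hsym, hpos, heven, hdet⟩
  have hsym' : G 1 0 = G 0 1 := hsym.apply 0 1
  have hG : G = !![G 0 0, G 0 1; G 0 1, G 1 1] := by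
    conv_lhs => rw [Matrix.eta_fin_two G]
    rw [hsym']
  have hvne : (![1, 0] : Fin 2 → ℤ) ≠ 0 := by
    intro h; have := congrFun h 0; simp at this
  have ha : 0 < G 0 0 := by
    have := hpos ![1, 0] hvne
    simpa [dotProduct, Matrix.mulVec, Fin.sum_univ_succ] using this
  have hdet2 : G 0 0 * G 1 1 - G 0 1 * G 0 1 = 75 := by
    rw [Matrix.det_fin_two, hsym'] at hdet
    exact hdet
  have := key75 (G 0 0).natAbs (G 0 0) (G 0 1) (G 1 1) le_rfl ha hdet2
    (heven 0) (heven 1)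
  rw [hG]
  exact this
end
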